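/- arXiv:1108.3113 — 9 statements merged into one kernel-verified Lean document; each statement's English description precedes it below -/
import Mathlib

section
/- Let n ≥ 3 be odd and let (v₁,…,v_{n−1}) be an (n−1)-icube in ℤⁿ with edge norm N. Then (v₁,…,v_{n−1}) extends to an n-icube in ℤⁿ if and only if N is a perfect square (i.e., the common length is an integer). -/
open Matrix Finset

section IcubeAux

lemma snoc_row_left {K : Type*} {m : ℕ} (r : Fin (m+1) → Fin (m+2) → K)
    (x : Fin (m+2) → K) (i : Fin (m+1)) :
    (Fin.snoc r x : Fin (m+2) → Fin (m+2) → K) (Fin.castAdd 1 i) = r i := by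
  have h : (Fin.castAdd 1 i : Fin (m+2)) = Fin.castSucc i := rfl
  rw [h, Fin.snoc_castSucc]

lemma snoc_row_right {K : Type*} {m : ℕ} (r : Fin (m+1) → Fin (m+2) → K)
    (x : Fin (m+2) → K) (i : Fin 1) :
    (Fin.snoc r x : Fin (m+2) → Fin (m+2) → K) (Fin.natAdd (m+1) i) = x := by
  have h : (Fin.natAdd (m+1) i : Fin (m+2)) = Fin.last (m+1) := by
    have := i.isLt
    ext
    simp
  rw [h, Fin.snoc_last]

lemma det_snoc_linear {R : Type*} [CommRing R] {m : ℕ} (r : Fin m → Fin (m+1) → R)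
    (x : Fin (m+1) → R) :
    (Matrix.of (Fin.snoc r x)).det
      = ∑ j, x j * (Matrix.of (Fin.snoc r (fun t => if j = t then 1 else 0))).det := by
  have key : ∀ y : Fin (m+1) → R,
      (Matrix.of (Fin.snoc r y)).det
        = (Matrix.detRowAlternating (R := R) (n := Fin (m+1))).toMultilinearMap.toLinearMap
            (Fin.snoc r 0) (Fin.last m) y := by
    intro y
    rw [MultilinearMap.toLinearMap_apply, Fin.update_snoc_last]
    rfl
  rw [key x]
  conv_lhs => rw [pi_eq_sum_univ x, map_sum]
  refine Finset.sum_congr rfl fun j _ => ?_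
  rw [LinearMap.map_smul, smul_eq_mul, ← key]

lemma det_snoc_row_eq {R : Type*} [CommRing R] {m : ℕ} (r : Fin m → Fin (m+1) → R) (i : Fin m) :
    (Matrix.of (Fin.snoc r (r i))).det = 0 := by
  apply Matrix.det_zero_of_row_eq (i := Fin.castSucc i) (j := Fin.last m)
    (Fin.castSucc_lt_last i).ne
  funext t
  simp [Fin.snoc_castSucc, Fin.snoc_last]

lemma det_snoc_sq {K : Type*} [Field K] {m : ℕ} (r : Fin (m+1) → Fin (m+2) → K)
    (x : Fin (m+2) → K) (N : K) (hN : N ≠ 0)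
    (horth : ∀ i j, i ≠ j → ∑ t, r i t * r j t = 0)
    (hlen : ∀ i, ∑ t, r i t * r i t = N) :
    (Matrix.of (Fin.snoc r x)).det ^ 2
      = N ^ m * (N * ∑ t, x t * x t - ∑ i, (∑ t, r i t * x t) ^ 2) := by
  have h1 : (Matrix.of (Fin.snoc r x)).det ^ 2
      = (Matrix.of (Fin.snoc r x) * (Matrix.of (Fin.snoc r x))ᵀ).det := by
    rw [Matrix.det_mul, Matrix.det_transpose, sq]
  letI : Invertible (N • (1 : Matrix (Fin (m+1)) (Fin (m+1)) K)) :=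
    ⟨N⁻¹ • (1 : Matrix (Fin (m+1)) (Fin (m+1)) K),
      by rw [Matrix.smul_mul, Matrix.one_mul, smul_smul, inv_mul_cancel₀ hN, one_smul],
      by rw [Matrix.smul_mul, Matrix.one_mul, smul_smul, mul_inv_cancel₀ hN, one_smul]⟩
  have hsub : (Matrix.of (Fin.snoc r x) * (Matrix.of (Fin.snoc r x))ᵀ).submatrix
        (finSumFinEquiv (m := m+1) (n := 1)) finSumFinEquiv
      = Matrix.fromBlocks (N • (1 : Matrix (Fin (m+1)) (Fin (m+1)) K))
          (Matrix.of fun i (_ : Fin 1) => ∑ t, r i t * x t)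
          (Matrix.of fun (_ : Fin 1) i => ∑ t, r i t * x t)
          (Matrix.of fun (_ : Fin 1) (_ : Fin 1) => ∑ t, x t * x t) := by
    funext p q
    have key : (Matrix.of (Fin.snoc r x) * (Matrix.of (Fin.snoc r x))ᵀ).submatrix
          (finSumFinEquiv (m := m+1) (n := 1)) finSumFinEquiv p q
        = ∑ t, Sum.elim r (fun _ => x) p t * Sum.elim r (fun _ => x) q t := by
      rcases p with i | i <;> rcases q with j | j <;>
        simp [Matrix.mul_apply, Matrix.transpose_apply, snoc_row_left, snoc_row_right]
    rw [key]
    rcases p with i | i <;> rcases q with j | j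
    · by_cases h : i = j
      · subst h
        simp [Matrix.fromBlocks, Matrix.one_apply, hlen i]
      · simp [Matrix.fromBlocks, Matrix.one_apply, h, horth i j h]
    · simp [Matrix.fromBlocks]
    · simpa [Matrix.fromBlocks] using
        Finset.sum_congr rfl fun t _ => mul_comm (x t) (r j t)
    · simp [Matrix.fromBlocks]
  have h2 : (Matrix.of (Fin.snoc r x) * (Matrix.of (Fin.snoc r x))ᵀ).det
      = (N • (1 : Matrix (Fin (m+1)) (Fin (m+1)) K)).det *
        ((Matrix.of fun (_ : Fin 1) (_ : Fin 1) => ∑ t, x t * x t)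
          - (Matrix.of fun (_ : Fin 1) i => ∑ t, r i t * x t)
            * ⅟ (N • (1 : Matrix (Fin (m+1)) (Fin (m+1)) K))
            * (Matrix.of fun i (_ : Fin 1) => ∑ t, r i t * x t)).det := by
    rw [← Matrix.det_submatrix_equiv_self (finSumFinEquiv (m := m+1) (n := 1)), hsub,
      Matrix.det_fromBlocks₁₁]
  have hAdet : (N • (1 : Matrix (Fin (m+1)) (Fin (m+1)) K)).det = N ^ (m+1) := by
    simp [Matrix.det_smul]
  have hinv : ⅟ (N • (1 : Matrix (Fin (m+1)) (Fin (m+1)) K))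
      = N⁻¹ • (1 : Matrix (Fin (m+1)) (Fin (m+1)) K) := rfl
  have h3 : ((Matrix.of fun (_ : Fin 1) (_ : Fin 1) => ∑ t, x t * x t)
          - (Matrix.of fun (_ : Fin 1) i => ∑ t, r i t * x t)
            * ⅟ (N • (1 : Matrix (Fin (m+1)) (Fin (m+1)) K))
            * (Matrix.of fun i (_ : Fin 1) => ∑ t, r i t * x t)).det
      = (∑ t, x t * x t) - N⁻¹ * ∑ i, (∑ t, r i t * x t) ^ 2 := by
    rw [Matrix.det_fin_one, hinv]
    simp only [Matrix.sub_apply, Matrix.mul_apply, Matrix.of_apply, Matrix.smul_apply,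
      Matrix.one_apply, smul_eq_mul, mul_ite, mul_one, mul_zero, ite_mul, zero_mul,
      Finset.sum_ite_eq, Finset.sum_ite_eq', Finset.mem_univ, if_true]
    rw [Finset.mul_sum]
    congr 1
    exact Finset.sum_congr rfl fun i _ => by ring
  rw [h1, h2, hAdet, h3]
  field_simp
  ring

/-- Casting an integer snoc-matrix to ℚ. -/
lemma cast_snoc {m : ℕ} (r : Fin m → Fin (m+1) → ℤ) (x : Fin (m+1) → ℤ) :
    (Matrix.of (Fin.snoc r x)).map (Int.cast : ℤ → ℚ)
      = Matrix.of (Fin.snoc (fun i t => ((r i t : ℚ))) (fun t => ((x t : ℚ)))) := by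
  funext a b
  refine Fin.lastCases ?_ ?_ a
  · simp [Matrix.map_apply, Fin.snoc_last]
  · intro i
    simp [Matrix.map_apply, Fin.snoc_castSucc]

lemma det_cast_snoc {m : ℕ} (r : Fin m → Fin (m+1) → ℤ) (x : Fin (m+1) → ℤ) :
    ((Matrix.of (Fin.snoc r x)).det : ℚ)
      = (Matrix.of (Fin.snoc (fun i t => ((r i t : ℚ))) (fun t => ((x t : ℚ))))).det := by
  rw [← cast_snoc]
  exact RingHom.map_det (Int.castRingHom ℚ) _

/-- Integer version of the Gram determinant identity. -/
lemma det_snoc_sq_int {m : ℕ} (r : Fin (m+1) → Fin (m+2) → ℤ) (x : Fin (m+2) → ℤ)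
    (N : ℤ) (hN : N ≠ 0)
    (horth : ∀ i j, i ≠ j → ∑ t, r i t * r j t = 0)
    (hlen : ∀ i, ∑ t, r i t * r i t = N) :
    (Matrix.of (Fin.snoc r x)).det ^ 2
      = N ^ m * (N * ∑ t, x t * x t - ∑ i, (∑ t, r i t * x t) ^ 2) := by
  have hQ := det_snoc_sq (fun i t => ((r i t : ℚ))) (fun t => ((x t : ℚ))) (N : ℚ)
    (by exact_mod_cast hN)
    (fun i j hij => by beta_reduce; exact_mod_cast horth i j hij)
    (fun i => by beta_reduce; exact_mod_cast hlen i)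
  rw [← det_cast_snoc] at hQ
  beta_reduce at hQ
  exact_mod_cast hQ

theorem icube_aux (m : ℕ) (hodd : Odd (m + 2))
    (v : Fin (m + 1) → (Fin (m + 2) → ℤ)) (N : ℤ)
    (hnz : ∀ ℓ, v ℓ ≠ 0)
    (horth : ∀ i j, i ≠ j → ∑ t, v i t * v j t = 0)
    (hlen : ∀ i, ∑ t, v i t * v i t = N) :
    (∃ w : Fin (m + 2) → ℤ, w ≠ 0 ∧ (∀ i, ∑ t, v i t * w t = 0) ∧
        ∑ t, w t * w t = N) ↔ ∃ k : ℤ, N = k ^ 2 := by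
  have hNpos : 0 < N := by
    rw [← hlen 0]
    obtain ⟨t, ht⟩ : ∃ t, v 0 t ≠ 0 := by
      by_contra hc
      push_neg at hc
      exact hnz 0 (funext hc)
    refine Finset.sum_pos' (fun t _ => mul_self_nonneg _) ⟨t, Finset.mem_univ t, ?_⟩
    exact mul_self_pos.mpr ht
  have hN0 : N ≠ 0 := hNpos.ne'
  constructor
  · -- extension exists → N is a square
    rintro ⟨w, hw0, hworth, hwlen⟩
    obtain ⟨s, hs⟩ := hodd
    have hbzero : ∑ i, (∑ t, v i t * w t) ^ 2 = 0 := by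
      refine Finset.sum_eq_zero fun i _ => ?_
      rw [hworth i]
      ring
    have hd2 : (Matrix.of (Fin.snoc v w)).det ^ 2 = N ^ (m+2) := by
      rw [det_snoc_sq_int v w N hN0 horth hlen, hbzero, hwlen, sub_zero]
      ring
    have hd2' : (Matrix.of (Fin.snoc v w)).det ^ 2 = N ^ (s*2+1) := by
      rw [hd2]
      congr 1
      omega
    have hdvd : N ^ s ∣ (Matrix.of (Fin.snoc v w)).det := by
      refine (Int.pow_dvd_pow_iff (by norm_num : (2:ℕ) ≠ 0)).mp ⟨N, ?_⟩
      rw [hd2', pow_succ, pow_mul]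
    obtain ⟨c, hc⟩ := hdvd
    refine ⟨c, ?_⟩
    have hcc : (N ^ s) ^ 2 * c ^ 2 = (N ^ s) ^ 2 * N := by
      rw [← mul_pow, ← hc, hd2', pow_succ, pow_mul]
    exact (mul_left_cancel₀ (pow_ne_zero 2 (pow_ne_zero s hN0)) hcc).symm
  · -- N is a square → extension exists
    rintro ⟨k, rfl⟩
    have hk0 : k ≠ 0 := by
      intro h
      rw [h] at hNpos
      simp at hNpos
    -- the generalized cross product
    obtain ⟨u, hu⟩ : ∃ u : Fin (m+2) → ℤ,
        ∀ j, u j = (Matrix.of (Fin.snoc v (fun t => if j = t then 1 else 0))).det :=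
      ⟨_, fun j => rfl⟩
    have hvu : ∀ i, ∑ j, v i j * u j = 0 := by
      intro i
      simp only [hu]
      rw [← det_snoc_linear]
      exact det_snoc_row_eq v i
    -- u is nonzero, via a rational kernel vector
    have hu_ne : u ≠ 0 := by
      intro hu0
      have hdet0 : (Matrix.of (Fin.snoc (fun i t => ((v i t : ℚ))) (0 : Fin (m+2) → ℚ))).det
          = 0 := by
        refine Matrix.det_eq_zero_of_row_eq_zero (Fin.last (m+1)) fun j => ?_
        simp [Fin.snoc_last]
      obtain ⟨y, hy0, hyv⟩ := Matrix.exists_mulVec_eq_zero_iff.mpr hdet0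
      have hy_orth : ∀ i, ∑ t, (v i t : ℚ) * y t = 0 := by
        intro i
        have hcomp := congrFun hyv (Fin.castSucc i)
        simpa [Matrix.mulVec, dotProduct, Fin.snoc_castSucc] using hcomp
      have hyy : 0 < ∑ t, y t * y t := by
        obtain ⟨t, ht⟩ : ∃ t, y t ≠ 0 := by
          by_contra hc
          push_neg at hc
          exact hy0 (funext hc)
        refine Finset.sum_pos' (fun t _ => mul_self_nonneg _) ⟨t, Finset.mem_univ t, ?_⟩
        exact mul_self_pos.mpr ht
      have hQ := det_snoc_sq (fun i t => ((v i t : ℚ))) y ((k^2 : ℤ) : ℚ)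
        (by exact_mod_cast hN0)
        (fun i j hij => by beta_reduce; exact_mod_cast horth i j hij)
        (fun i => by beta_reduce; exact_mod_cast hlen i)
      beta_reduce at hQ
      have hbQ : ∑ i, (∑ t, (v i t : ℚ) * y t) ^ 2 = 0 := by
        refine Finset.sum_eq_zero fun i _ => ?_
        rw [hy_orth i]
        ring
      have hdet_ne : (Matrix.of (Fin.snoc (fun i t => ((v i t : ℚ))) y)).det ≠ 0 := by
        intro h
        rw [h] at hQ
        have hNQ : (0:ℚ) < ((k^2 : ℤ) : ℚ) := by exact_mod_cast hNpos
        have hpos : (0:ℚ) < ((k^2 : ℤ) : ℚ) ^ m * (((k^2 : ℤ) : ℚ) * ∑ t, y t * y t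
            - ∑ i, (∑ t, (v i t : ℚ) * y t) ^ 2) := by
          rw [hbQ, sub_zero]
          positivity
        rw [← hQ] at hpos
        simp at hpos
      apply hdet_ne
      rw [det_snoc_linear]
      refine Finset.sum_eq_zero fun j _ => ?_
      have hcast : (Matrix.of (Fin.snoc (fun i t => ((v i t : ℚ)))
          (fun t => if j = t then (1:ℚ) else 0))).det
          = ((Matrix.of (Fin.snoc v (fun t => if j = t then (1:ℤ) else 0))).det : ℚ) := by
        have hfun : (fun t => ((if j = t then (1:ℤ) else 0 : ℤ) : ℚ))
            = (fun t : Fin (m+2) => if j = t then (1:ℚ) else 0) := by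
          funext t
          split_ifs <;> simp
        rw [det_cast_snoc, hfun]
      rw [hcast, ← hu j]
      have : u j = 0 := by rw [hu0]; rfl
      rw [this]
      ring
    -- sum of squares of u
    have hS2 : (∑ j, u j * u j) ^ 2 = (k^2) ^ (m+1) * ∑ j, u j * u j := by
      have h := det_snoc_sq_int v u (k^2) hN0 horth hlen
      rw [det_snoc_linear] at h
      simp only [← hu] at h
      have hbz : ∑ i, (∑ t, v i t * u t) ^ 2 = 0 := by
        refine Finset.sum_eq_zero fun i _ => ?_
        rw [hvu i]
        ring
      rw [hbz, sub_zero] at h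
      rw [h]
      ring
    have hS_pos : 0 < ∑ j, u j * u j := by
      obtain ⟨j, hj⟩ : ∃ j, u j ≠ 0 := by
        by_contra hc
        push_neg at hc
        exact hu_ne (funext hc)
      refine Finset.sum_pos' (fun t _ => mul_self_nonneg _) ⟨j, Finset.mem_univ j, ?_⟩
      exact mul_self_pos.mpr hj
    have hS : ∑ j, u j * u j = (k^2) ^ (m+1) := by
      have h2 := hS2
      rw [sq] at h2
      exact mul_right_cancel₀ hS_pos.ne' h2
    -- divisibility of the components of u
    have hdvd : ∀ j, k ^ m ∣ u j := by
      intro j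
      have hj := det_snoc_sq_int v (fun t => if j = t then 1 else 0) (k^2) hN0 horth hlen
      have he1 : ∑ t, (if j = t then (1:ℤ) else 0) * (if j = t then (1:ℤ) else 0) = 1 := by
        simp
      refine (Int.pow_dvd_pow_iff (by norm_num : (2:ℕ) ≠ 0)).mp
        ⟨k^2 * 1 - ∑ i, (∑ t, v i t * (if j = t then (1:ℤ) else 0)) ^ 2, ?_⟩
      have hval : u j ^ 2 = (k^2) ^ m *
          ((k^2) * 1 - ∑ i, (∑ t, v i t * (if j = t then (1:ℤ) else 0)) ^ 2) := by
        rw [hu j, hj, he1]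
      rw [hval]
      ring
    have hws : ∀ j, ∃ c, u j = k ^ m * c := fun j => hdvd j
    choose w hw using hws
    have hnorm : ∑ t, w t * w t = k ^ 2 := by
      have hkey : (k^m * k^m) * ∑ t, w t * w t = (k^m * k^m) * k^2 := by
        have h1 : (k^m * k^m) * ∑ t, w t * w t = ∑ t, u t * u t := by
          rw [Finset.mul_sum]
          exact Finset.sum_congr rfl fun t _ => by rw [hw t]; ring
        rw [h1, hS]
        ring
      exact mul_left_cancel₀ (by positivity) hkey
    refine ⟨w, ?_, ?_, hnorm⟩
    · intro hwz
      rw [hwz] at hnorm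
      have hzz : (k:ℤ) ^ 2 = 0 := by simpa using hnorm.symm
      exact hk0 (pow_eq_zero_iff (by norm_num : (2:ℕ) ≠ 0) |>.mp hzz)
    · intro i
      have hmul : k^m * ∑ t, v i t * w t = 0 := by
        rw [Finset.mul_sum, ← hvu i]
        exact Finset.sum_congr rfl fun t _ => by rw [hw t]; ring
      exact (mul_eq_zero.mp hmul).resolve_left (pow_ne_zero m hk0)

end IcubeAux

/-- For odd n ≥ 3, an (n-1)-icube in ℤⁿ with edge norm N extends to an
n-icube if and only if N is a perfect square. -/
theorem icube_extend_odd_iff_square (n : ℕ) (hn : 3 ≤ n) (hodd : Odd n)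
    (v : Fin (n - 1) → (Fin n → ℤ)) (N : ℤ)
    (hnz : ∀ ℓ, v ℓ ≠ 0)
    (horth : ∀ i j, i ≠ j → ∑ t, v i t * v j t = 0)
    (hlen : ∀ i, ∑ t, v i t * v i t = N) :
    (∃ w : Fin n → ℤ, w ≠ 0 ∧ (∀ i, ∑ t, v i t * w t = 0) ∧
        ∑ t, w t * w t = N) ↔ ∃ k : ℤ, N = k ^ 2 := by
  obtain ⟨m, rfl⟩ : ∃ m, n = m + 2 := ⟨n - 2, by omega⟩
  exact icube_aux m hodd v N hnz horth hlen
end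

section
/- If n is odd, then the edge length of any n-icube in ℤⁿ is an integer; equivalently, the edge norm is a perfect square. -/
/-- If n is odd, the edge norm of any n-icube in ℤⁿ is a perfect square. -/
theorem icube_odd_dim_norm_square (n : ℕ) (hodd : Odd n)
    (v : Fin n → (Fin n → ℤ)) (N : ℤ)
    (hnz : ∀ ℓ, v ℓ ≠ 0)
    (horth : ∀ i j, i ≠ j → ∑ t, v i t * v j t = 0)
    (hlen : ∀ i, ∑ t, v i t * v i t = N) :
    ∃ k : ℤ, N = k ^ 2 := by
  obtain ⟨m, hm⟩ := hodd
  have hn1 : 0 < n := by omega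
  have i0 : Fin n := ⟨0, hn1⟩
  -- N is positive
  have hNpos : 0 < N := by
    rw [← hlen i0]
    obtain ⟨t0, ht0⟩ : ∃ t, v i0 t ≠ 0 := by
      by_contra h
      push_neg at h
      exact hnz i0 (funext h)
    exact Finset.sum_pos' (fun t _ => mul_self_nonneg _)
      ⟨t0, Finset.mem_univ t0, mul_self_pos.mpr ht0⟩
  -- the matrix whose rows are the vectors
  set M : Matrix (Fin n) (Fin n) ℤ := Matrix.of v with hMdef
  have hMMT : M * M.transpose = N • (1 : Matrix (Fin n) (Fin n) ℤ) := by
    ext i j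
    simp only [Matrix.mul_apply, Matrix.transpose_apply, Matrix.smul_apply,
      Matrix.one_apply, hMdef, Matrix.of_apply]
    by_cases h : i = j
    · subst h; simp [hlen i]
    · simp [h, horth i j h]
  have hdet : M.det ^ 2 = N ^ n := by
    have := congrArg Matrix.det hMMT
    rwa [Matrix.det_mul, Matrix.det_transpose, ← sq, Matrix.det_smul, Matrix.det_one,
      mul_one, Fintype.card_fin] at this
  -- N^m divides det M
  have hdvd : N ^ m ∣ M.det := by
    rw [← Int.pow_dvd_pow_iff (two_ne_zero), hdet, hm, ← pow_mul]
    exact pow_dvd_pow N (by omega)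
  obtain ⟨e, he⟩ := hdvd
  refine ⟨e, ?_⟩
  have hcancel : N ^ (2 * m) * N = N ^ (2 * m) * e ^ 2 := by
    have : N ^ n = N ^ (2 * m) * N := by rw [hm, pow_succ]
    rw [← this, ← hdet, he, mul_pow, ← pow_mul, mul_comm m 2]
  exact (mul_left_cancel₀ (pow_ne_zero _ hNpos.ne') hcancel)
end

section
/- Every vector v ∈ ℤ⁸ with v ≠ 0 can be extended to an 8-icube in ℤ⁸, using the rows of the Cayley-number multiplication matrix: for v = (a,b,c,d,e,f,g,h), the eight rows (a,b,c,d,e,f,g,h), (b,−a,d,−c,f,−e,−h,g), (c,−d,−a,b,g,h,−e,−f), (d,c,−b,−a,h,−g,f,−e), (e,−f,−g,−h,−a,b,c,d), (f,e,−h,g,−b,−a,−d,c), (g,h,e,−f,−c,d,−a,−b), (h,−g,f,e,−d,−c,b,−a) are pairwise orthogonal and of equal length. -/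
set_option maxHeartbeats 1000000

section aux
variable {α : Type*} (x0 x1 x2 x3 x4 x5 x6 x7 : α)

lemma vec8_at0 : ![x0,x1,x2,x3,x4,x5,x6,x7] (0 : Fin 8) = x0 := rfl
lemma vec8_at1 : ![x0,x1,x2,x3,x4,x5,x6,x7] (1 : Fin 8) = x1 := rfl
lemma vec8_at2 : ![x0,x1,x2,x3,x4,x5,x6,x7] (2 : Fin 8) = x2 := rfl
lemma vec8_at3 : ![x0,x1,x2,x3,x4,x5,x6,x7] (3 : Fin 8) = x3 := rfl
lemma vec8_at4 : ![x0,x1,x2,x3,x4,x5,x6,x7] (4 : Fin 8) = x4 := rfl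
lemma vec8_at5 : ![x0,x1,x2,x3,x4,x5,x6,x7] (5 : Fin 8) = x5 := rfl
lemma vec8_at6 : ![x0,x1,x2,x3,x4,x5,x6,x7] (6 : Fin 8) = x6 := rfl
lemma vec8_at7 : ![x0,x1,x2,x3,x4,x5,x6,x7] (7 : Fin 8) = x7 := rfl

lemma vec8_mk0 (h : 0 < 8) : ![x0,x1,x2,x3,x4,x5,x6,x7] (⟨0,h⟩ : Fin 8) = x0 := rfl
lemma vec8_mk1 (h : 1 < 8) : ![x0,x1,x2,x3,x4,x5,x6,x7] (⟨1,h⟩ : Fin 8) = x1 := rfl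
lemma vec8_mk2 (h : 2 < 8) : ![x0,x1,x2,x3,x4,x5,x6,x7] (⟨2,h⟩ : Fin 8) = x2 := rfl
lemma vec8_mk3 (h : 3 < 8) : ![x0,x1,x2,x3,x4,x5,x6,x7] (⟨3,h⟩ : Fin 8) = x3 := rfl
lemma vec8_mk4 (h : 4 < 8) : ![x0,x1,x2,x3,x4,x5,x6,x7] (⟨4,h⟩ : Fin 8) = x4 := rfl
lemma vec8_mk5 (h : 5 < 8) : ![x0,x1,x2,x3,x4,x5,x6,x7] (⟨5,h⟩ : Fin 8) = x5 := rfl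
lemma vec8_mk6 (h : 6 < 8) : ![x0,x1,x2,x3,x4,x5,x6,x7] (⟨6,h⟩ : Fin 8) = x6 := rfl
lemma vec8_mk7 (h : 7 < 8) : ![x0,x1,x2,x3,x4,x5,x6,x7] (⟨7,h⟩ : Fin 8) = x7 := rfl
end aux

/-- Every nonzero v ∈ ℤ⁸ extends to an 8-icube, explicitly given by the
rows of the Cayley-number multiplication matrix. -/
theorem int_vec8_extends_to_icube (a b c d e f g h : ℤ)
    (hne : ¬(a = 0 ∧ b = 0 ∧ c = 0 ∧ d = 0 ∧ e = 0 ∧ f = 0 ∧ g = 0 ∧ h = 0)) :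
    let M : Fin 8 → (Fin 8 → ℤ) :=
      ![![a, b, c, d, e, f, g, h],
        ![b, -a, d, -c, f, -e, -h, g],
        ![c, -d, -a, b, g, h, -e, -f],
        ![d, c, -b, -a, h, -g, f, -e],
        ![e, -f, -g, -h, -a, b, c, d],
        ![f, e, -h, g, -b, -a, -d, c],
        ![g, h, e, -f, -c, d, -a, -b],
        ![h, -g, f, e, -d, -c, b, -a]]
    (∀ ℓ, M ℓ ≠ 0) ∧ (∀ i j, i ≠ j → ∑ t, M i t * M j t = 0) ∧
      (∀ i j, ∑ t, M i t * M i t = ∑ t, M j t * M j t) := by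
  intro M
  refine ⟨?_, ?_, ?_⟩
  · intro ℓ h0
    apply hne
    have e0 := congrFun h0 0
    have e1 := congrFun h0 1
    have e2 := congrFun h0 2
    have e3 := congrFun h0 3
    have e4 := congrFun h0 4
    have e5 := congrFun h0 5
    have e6 := congrFun h0 6
    have e7 := congrFun h0 7
    fin_cases ℓ <;>
      simp only [M, vec8_mk0, vec8_mk1, vec8_mk2, vec8_mk3, vec8_mk4, vec8_mk5,
        vec8_mk6, vec8_mk7, vec8_at0, vec8_at1, vec8_at2, vec8_at3, vec8_at4,
        vec8_at5, vec8_at6, vec8_at7, Pi.zero_apply, neg_eq_zero]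
        at e0 e1 e2 e3 e4 e5 e6 e7 <;>
      exact ⟨by assumption, by assumption, by assumption, by assumption,
        by assumption, by assumption, by assumption, by assumption⟩
  · intro i j hij
    fin_cases i <;> fin_cases j <;>
      first
      | exact absurd rfl hij
      | (simp only [M, Fin.sum_univ_eight, vec8_mk0, vec8_mk1, vec8_mk2, vec8_mk3,
          vec8_mk4, vec8_mk5, vec8_mk6, vec8_mk7, vec8_at0, vec8_at1, vec8_at2,
          vec8_at3, vec8_at4, vec8_at5, vec8_at6, vec8_at7]; try ring)
  · have key : ∀ i, ∑ t, M i t * M i t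
        = a*a + b*b + c*c + d*d + e*e + f*f + g*g + h*h := by
      intro i
      fin_cases i <;>
        (simp only [M, Fin.sum_univ_eight, vec8_mk0, vec8_mk1, vec8_mk2, vec8_mk3,
          vec8_mk4, vec8_mk5, vec8_mk6, vec8_mk7, vec8_at0, vec8_at1, vec8_at2,
          vec8_at3, vec8_at4, vec8_at5, vec8_at6, vec8_at7]; try ring)
    intro i j
    rw [key, key]
end

section
/- Let α ∈ 𝕃 with Norm(α) ≡ 4 (mod 8). Then α = (1+i)β for some β ∈ 𝕃. -/
open scoped Quaternion

/-- The Lipschitz quaternion 1 + i. -/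
def onePlusI : ℍ[ℤ] := ⟨1, 1, 0, 0⟩

lemma zmod8_key : ∀ x y z w : ZMod 8, x^2 + y^2 + z^2 + w^2 = 4 →
    (ZMod.castHom (show (2:ℕ) ∣ 8 by norm_num) (ZMod 2)) (x + y) = 0 ∧
    (ZMod.castHom (show (2:ℕ) ∣ 8 by norm_num) (ZMod 2)) (z + w) = 0 := by decide

/-- If Norm(α) ≡ 4 (mod 8), then α = (1+i)β for some Lipschitz β. -/
theorem lipschitz_norm_four_mod_eight (α : ℍ[ℤ])
    (h : Quaternion.normSq α % 8 = 4) :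
    ∃ β : ℍ[ℤ], α = onePlusI * β := by
  obtain ⟨a, b, c, d⟩ := α
  erw [Quaternion.normSq_def'] at h
  simp only at h
  have hdvd : (8 : ℤ) ∣ (a^2 + b^2 + c^2 + d^2) - 4 := by omega
  have h8 : ((a : ZMod 8))^2 + (b : ZMod 8)^2 + (c : ZMod 8)^2 + (d : ZMod 8)^2 = 4 := by
    have := (ZMod.intCast_zmod_eq_zero_iff_dvd _ 8).2 hdvd
    push_cast at this
    linear_combination this
  have key := zmod8_key (a : ZMod 8) b c d h8
  have hab : (2 : ℤ) ∣ a + b := by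
    have h1 := key.1
    have hz : ((a + b : ℤ) : ZMod 2) = 0 := by
      push_cast
      rw [show ((a : ZMod 2) + b) = (ZMod.castHom (show (2:ℕ) ∣ 8 by norm_num) (ZMod 2))
        ((a : ZMod 8) + (b : ZMod 8)) by push_cast [ZMod.castHom_apply, ZMod.cast_add (show (2:ℕ) ∣ 8 by norm_num), ZMod.cast_intCast (show (2:ℕ) ∣ 8 by norm_num)]; rfl]
      exact h1
    exact_mod_cast (ZMod.intCast_zmod_eq_zero_iff_dvd _ 2).1 hz
  have hcd : (2 : ℤ) ∣ c + d := by
    have h1 := key.2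
    have hz : ((c + d : ℤ) : ZMod 2) = 0 := by
      push_cast
      rw [show ((c : ZMod 2) + d) = (ZMod.castHom (show (2:ℕ) ∣ 8 by norm_num) (ZMod 2))
        ((c : ZMod 8) + (d : ZMod 8)) by push_cast [ZMod.castHom_apply, ZMod.cast_add (show (2:ℕ) ∣ 8 by norm_num), ZMod.cast_intCast (show (2:ℕ) ∣ 8 by norm_num)]; rfl]
      exact h1
    exact_mod_cast (ZMod.intCast_zmod_eq_zero_iff_dvd _ 2).1 hz
  obtain ⟨p, hp⟩ := hab
  obtain ⟨q, hq⟩ := hcd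
  refine ⟨⟨p, p - a, q, q - c⟩, ?_⟩
  show (⟨a, b, c, d⟩ : ℍ[ℤ]) = (⟨1, 1, 0, 0⟩ : ℍ[ℤ]) * (⟨p, p - a, q, q - c⟩ : ℍ[ℤ])
  ext <;> simp [Quaternion.re_mul, Quaternion.imI_mul, Quaternion.imJ_mul,
    Quaternion.imK_mul] <;> omega
end

section
/- Let α ∈ 𝕃 with Norm(α) ≡ 2 (mod 4). Then there is exactly one η ∈ {1+i, 1+j, 1+k} such that α = ηβ for some β ∈ 𝕃. -/
open scoped Quaternion

/-- The Lipschitz quaternion 1 + j. -/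
def onePlusJ : ℍ[ℤ] := ⟨1, 0, 1, 0⟩
/-- The Lipschitz quaternion 1 + k. -/
def onePlusK : ℍ[ℤ] := ⟨1, 0, 0, 1⟩

lemma divI' (α : ℍ[ℤ]) : (∃ β, α = onePlusI * β) ↔
    (α.re % 2 = α.imI % 2 ∧ α.imJ % 2 = α.imK % 2) := by
  constructor
  · rintro ⟨β, rfl⟩
    simp only [Quaternion.re_mul, Quaternion.imI_mul, Quaternion.imJ_mul, Quaternion.imK_mul]
    simp [onePlusI, Quaternion.re_mul, Quaternion.imI_mul, Quaternion.imJ_mul,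
      Quaternion.imK_mul]
    constructor <;> omega
  · rintro ⟨h1, h2⟩
    refine ⟨⟨(α.re + α.imI)/2, (α.imI - α.re)/2, (α.imJ + α.imK)/2, (α.imK - α.imJ)/2⟩, ?_⟩
    rw [Quaternion.ext_iff]
    erw [Quaternion.re_mul, Quaternion.imI_mul, Quaternion.imJ_mul, Quaternion.imK_mul]
    simp [onePlusI, Quaternion.re_mul, Quaternion.imI_mul, Quaternion.imJ_mul,
      Quaternion.imK_mul]
    refine ⟨?_, ?_, ?_, ?_⟩ <;> omega

lemma divJ' (α : ℍ[ℤ]) : (∃ β, α = onePlusJ * β) ↔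
    (α.re % 2 = α.imJ % 2 ∧ α.imI % 2 = α.imK % 2) := by
  constructor
  · rintro ⟨β, rfl⟩
    simp only [Quaternion.re_mul, Quaternion.imI_mul, Quaternion.imJ_mul, Quaternion.imK_mul]
    simp [onePlusJ, Quaternion.re_mul, Quaternion.imI_mul, Quaternion.imJ_mul,
      Quaternion.imK_mul]
    constructor <;> omega
  · rintro ⟨h1, h2⟩
    refine ⟨⟨(α.re + α.imJ)/2, (α.imI - α.imK)/2, (α.imJ - α.re)/2, (α.imI + α.imK)/2⟩, ?_⟩
    rw [Quaternion.ext_iff]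
    erw [Quaternion.re_mul, Quaternion.imI_mul, Quaternion.imJ_mul, Quaternion.imK_mul]
    simp [onePlusJ, Quaternion.re_mul, Quaternion.imI_mul, Quaternion.imJ_mul,
      Quaternion.imK_mul]
    refine ⟨?_, ?_, ?_, ?_⟩ <;> omega

lemma divK' (α : ℍ[ℤ]) : (∃ β, α = onePlusK * β) ↔
    (α.re % 2 = α.imK % 2 ∧ α.imI % 2 = α.imJ % 2) := by
  constructor
  · rintro ⟨β, rfl⟩
    simp only [Quaternion.re_mul, Quaternion.imI_mul, Quaternion.imJ_mul, Quaternion.imK_mul]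
    simp [onePlusK, Quaternion.re_mul, Quaternion.imI_mul, Quaternion.imJ_mul,
      Quaternion.imK_mul]
    constructor <;> omega
  · rintro ⟨h1, h2⟩
    refine ⟨⟨(α.re + α.imK)/2, (α.imI + α.imJ)/2, (α.imJ - α.imI)/2, (α.imK - α.re)/2⟩, ?_⟩
    rw [Quaternion.ext_iff]
    erw [Quaternion.re_mul, Quaternion.imI_mul, Quaternion.imJ_mul, Quaternion.imK_mul]
    simp [onePlusK, Quaternion.re_mul, Quaternion.imI_mul, Quaternion.imJ_mul,
      Quaternion.imK_mul]
    refine ⟨?_, ?_, ?_, ?_⟩ <;> omega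

lemma sq_mod4' (n : ℤ) : ∃ s, n^2 = s ∧ ((s % 4 = 0 ∧ n % 2 = 0) ∨ (s % 4 = 1 ∧ n % 2 = 1)) := by
  refine ⟨n^2, rfl, ?_⟩
  rcases Int.even_or_odd n with ⟨k, rfl⟩ | ⟨k, rfl⟩
  · left
    have h1 : (k + k)^2 = 4 * k^2 := by ring
    rw [h1]
    exact ⟨Int.mul_emod_right 4 _, by omega⟩
  · right
    have h1 : (2*k + 1)^2 = 1 + 4 * (k^2 + k) := by ring
    rw [h1]
    constructor
    · have := Int.add_mul_emod_self_left (a := (1:ℤ)) (b := 4) (c := k^2 + k)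
      omega
    · omega

set_option maxHeartbeats 1000000 in
lemma parity_of4 (a b c d : ℤ) (h : (a^2 + b^2 + c^2 + d^2) % 4 = 2) :
    (a%2=1 ∧ b%2=1 ∧ c%2=0 ∧ d%2=0) ∨ (a%2=1 ∧ b%2=0 ∧ c%2=1 ∧ d%2=0) ∨
    (a%2=1 ∧ b%2=0 ∧ c%2=0 ∧ d%2=1) ∨ (a%2=0 ∧ b%2=1 ∧ c%2=1 ∧ d%2=0) ∨
    (a%2=0 ∧ b%2=1 ∧ c%2=0 ∧ d%2=1) ∨ (a%2=0 ∧ b%2=0 ∧ c%2=1 ∧ d%2=1) := by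
  obtain ⟨sa, ha, ha'⟩ := sq_mod4' a
  obtain ⟨sb, hb, hb'⟩ := sq_mod4' b
  obtain ⟨sc, hc, hc'⟩ := sq_mod4' c
  obtain ⟨sd, hd, hd'⟩ := sq_mod4' d
  rw [ha, hb, hc, hd] at h
  omega

/-- If Norm(α) ≡ 2 (mod 4), then exactly one η ∈ {1+i, 1+j, 1+k}
left-divides α in 𝕃. -/
theorem lipschitz_norm_two_mod_four (α : ℍ[ℤ])
    (h : Quaternion.normSq α % 4 = 2) :
    ∃! η : ℍ[ℤ], η ∈ ({onePlusI, onePlusJ, onePlusK} : Set ℍ[ℤ]) ∧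
      ∃ β : ℍ[ℤ], α = η * β := by
  rw [Quaternion.normSq_def'] at h
  have hp := parity_of4 _ _ _ _ h
  rcases hp with ⟨h1,h2,h3,h4⟩ | ⟨h1,h2,h3,h4⟩ | ⟨h1,h2,h3,h4⟩ | ⟨h1,h2,h3,h4⟩ |
    ⟨h1,h2,h3,h4⟩ | ⟨h1,h2,h3,h4⟩
  · refine ⟨onePlusI, ⟨by simp, (divI' α).mpr ⟨by omega, by omega⟩⟩, ?_⟩
    rintro y ⟨hmem, hd⟩
    simp only [Set.mem_insert_iff, Set.mem_singleton_iff] at hmem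
    rcases hmem with rfl | rfl | rfl
    · rfl
    · rw [divJ' α] at hd; omega
    · rw [divK' α] at hd; omega
  · refine ⟨onePlusJ, ⟨by simp, (divJ' α).mpr ⟨by omega, by omega⟩⟩, ?_⟩
    rintro y ⟨hmem, hd⟩
    simp only [Set.mem_insert_iff, Set.mem_singleton_iff] at hmem
    rcases hmem with rfl | rfl | rfl
    · rw [divI' α] at hd; omega
    · rfl
    · rw [divK' α] at hd; omega
  · refine ⟨onePlusK, ⟨by simp, (divK' α).mpr ⟨by omega, by omega⟩⟩, ?_⟩
    rintro y ⟨hmem, hd⟩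
    simp only [Set.mem_insert_iff, Set.mem_singleton_iff] at hmem
    rcases hmem with rfl | rfl | rfl
    · rw [divI' α] at hd; omega
    · rw [divJ' α] at hd; omega
    · rfl
  · refine ⟨onePlusK, ⟨by simp, (divK' α).mpr ⟨by omega, by omega⟩⟩, ?_⟩
    rintro y ⟨hmem, hd⟩
    simp only [Set.mem_insert_iff, Set.mem_singleton_iff] at hmem
    rcases hmem with rfl | rfl | rfl
    · rw [divI' α] at hd; omega
    · rw [divJ' α] at hd; omega
    · rfl
  · refine ⟨onePlusJ, ⟨by simp, (divJ' α).mpr ⟨by omega, by omega⟩⟩, ?_⟩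
    rintro y ⟨hmem, hd⟩
    simp only [Set.mem_insert_iff, Set.mem_singleton_iff] at hmem
    rcases hmem with rfl | rfl | rfl
    · rw [divI' α] at hd; omega
    · rfl
    · rw [divK' α] at hd; omega
  · refine ⟨onePlusI, ⟨by simp, (divI' α).mpr ⟨by omega, by omega⟩⟩, ?_⟩
    rintro y ⟨hmem, hd⟩
    simp only [Set.mem_insert_iff, Set.mem_singleton_iff] at hmem
    rcases hmem with rfl | rfl | rfl
    · rfl
    · rw [divJ' α] at hd; omega
    · rw [divK' α] at hd; omega
end

section
/- Let α, β be nonzero quaternions and γ a nonzero quaternion. Then α and β are twins if and only if γα and γβ are twins, if and only if αγ and βγ are twins. -/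
open scoped Quaternion

/-- Two real quaternions are twins if their coefficient vectors in ℝ⁴ are orthogonal
and have the same Euclidean norm. -/
def Twin (α β : ℍ[ℝ]) : Prop :=
  α.re * β.re + α.imI * β.imI + α.imJ * β.imJ + α.imK * β.imK = 0 ∧
    Quaternion.normSq α = Quaternion.normSq β

lemma dot_mul_left (γ α β : ℍ[ℝ]) :
    (γ*α).re * (γ*β).re + (γ*α).imI * (γ*β).imI + (γ*α).imJ * (γ*β).imJ
      + (γ*α).imK * (γ*β).imK
    = Quaternion.normSq γ * (α.re * β.re + α.imI * β.imI + α.imJ * β.imJ + α.imK * β.imK) := by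
  simp only [Quaternion.re_mul, Quaternion.imI_mul, Quaternion.imJ_mul, Quaternion.imK_mul,
    Quaternion.normSq_def']
  ring

lemma dot_mul_right (γ α β : ℍ[ℝ]) :
    (α*γ).re * (β*γ).re + (α*γ).imI * (β*γ).imI + (α*γ).imJ * (β*γ).imJ
      + (α*γ).imK * (β*γ).imK
    = Quaternion.normSq γ * (α.re * β.re + α.imI * β.imI + α.imJ * β.imJ + α.imK * β.imK) := by
  simp only [Quaternion.re_mul, Quaternion.imI_mul, Quaternion.imJ_mul, Quaternion.imK_mul,
    Quaternion.normSq_def']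
  ring

/-- for nonzero γ, twinness is preserved and reflected by left and by
right multiplication by γ. -/
theorem twin_iff_mul (α β γ : ℍ[ℝ]) (hα : α ≠ 0) (hβ : β ≠ 0) (hγ : γ ≠ 0) :
    (Twin α β ↔ Twin (γ * α) (γ * β)) ∧ (Twin α β ↔ Twin (α * γ) (β * γ)) := by
  have hns : Quaternion.normSq γ ≠ 0 := by
    simpa [Quaternion.normSq_eq_zero] using hγ
  constructor
  · unfold Twin
    rw [dot_mul_left, map_mul, map_mul, mul_eq_zero, mul_right_inj' hns, or_iff_right hns]
  · unfold Twin
    rw [dot_mul_right, map_mul, map_mul, mul_eq_zero, mul_left_inj' hns, or_iff_right hns]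
end

section
/- If α ∈ S_g and β ∈ S_h are Lipschitz quaternions of odd norm, then αβ ∈ S_{g*h}, where * is the multiplication in {1,i,j,k} given by quaternion multiplication with signs disregarded (the Klein four-group structure). -/
open scoped Quaternion

/-- The four coefficients of a Lipschitz quaternion, indexed by the Klein four-group
`Bool × Bool`, where (false,false) ↦ 1, (true,false) ↦ i, (false,true) ↦ j,
(true,true) ↦ k.  Multiplication of the quaternion units 1, i, j, k with signs
disregarded corresponds to componentwise `xor` on `Bool × Bool`. -/
def coeff (α : ℍ[ℤ]) : Bool × Bool → ℤ
  | (false, false) => α.re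
  | (true, false) => α.imI
  | (false, true) => α.imJ
  | (true, true) => α.imK

/-- α ∈ S_g : the coefficient indexed by g has parity different from each of the
other three coefficients. -/
def InS (g : Bool × Bool) (α : ℍ[ℤ]) : Prop :=
  ∀ h : Bool × Bool, h ≠ g → coeff α g % 2 ≠ coeff α h % 2

/-- Convolution of parity vectors over the Klein four-group. -/
def conv (a b : Bool × Bool → ZMod 2) (k : Bool × Bool) : ZMod 2 :=
  ∑ p : Bool × Bool, a p * b (xor p.1 k.1, xor p.2 k.2)

lemma emod_two_eq (a b : ℤ) : a % 2 = b % 2 ↔ (a : ZMod 2) = (b : ZMod 2) :=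
  (ZMod.intCast_eq_intCast_iff a b 2).symm

lemma key : ∀ a b : Bool × Bool → ZMod 2, ∀ g h : Bool × Bool,
    (∑ p : Bool × Bool, (a p)^2) = 1 → (∑ p : Bool × Bool, (b p)^2) = 1 →
    (∀ x, x ≠ g → a g ≠ a x) → (∀ x, x ≠ h → b h ≠ b x) →
    ∀ k, k ≠ (xor g.1 h.1, xor g.2 h.2) →
      conv a b (xor g.1 h.1, xor g.2 h.2) ≠ conv a b k := by decide

lemma cast_coeff_mul (α β : ℍ[ℤ]) (k : Bool × Bool) :
    ((coeff (α * β) k : ZMod 2)) =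
      conv (fun p => ((coeff α p : ZMod 2))) (fun p => ((coeff β p : ZMod 2))) k := by
  rcases k with ⟨k1, k2⟩
  cases k1 <;> cases k2 <;>
    simp [conv, coeff, Fintype.sum_prod_type, Fintype.sum_bool,
      Quaternion.re_mul, Quaternion.imI_mul, Quaternion.imJ_mul, Quaternion.imK_mul] <;>
    push_cast <;> ring_nf <;> simp [CharTwo.neg_eq, sub_eq_add_neg] <;> ring

lemma odd_sum (α : ℍ[ℤ]) (hα : Odd (Quaternion.normSq α)) :
    (∑ p : Bool × Bool, ((coeff α p : ZMod 2))^2) = 1 := by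
  obtain ⟨m, hm⟩ := hα
  have h2 : ((Quaternion.normSq α : ℤ) : ZMod 2) = 1 := by
    rw [hm]; push_cast; rw [show (2:ZMod 2) = 0 from rfl]; ring
  rw [Quaternion.normSq_def'] at h2
  simp only [Fintype.sum_prod_type, Fintype.sum_bool, coeff]
  push_cast at h2 ⊢
  linear_combination h2

/-- if α ∈ S_g and β ∈ S_h have odd norm, then αβ ∈ S_{g*h}, where *
is the Klein four-group multiplication (componentwise xor). -/
theorem mul_mem_S (α β : ℍ[ℤ]) (g h : Bool × Bool)
    (hα : Odd (Quaternion.normSq α)) (hβ : Odd (Quaternion.normSq β))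
    (hg : InS g α) (hh : InS h β) :
    InS (xor g.1 h.1, xor g.2 h.2) (α * β) := by
  intro k hk
  rw [Ne, emod_two_eq, cast_coeff_mul, cast_coeff_mul]
  exact key _ _ g h (odd_sum α hα) (odd_sum β hβ)
    (fun x hx => by rw [Ne, ← emod_two_eq]; exact hg x hx)
    (fun x hx => by rw [Ne, ← emod_two_eq]; exact hh x hx) k hk
end

section
/- The primary Lipschitz quaternions are closed under multiplication: if α and β are primary, then αβ is primary. Moreover, if α, β are primary and β = αγ (or β = γα) with γ a Hurwitz quaternion, then γ is primary. -/
open scoped Quaternion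

/-- Build a rational quaternion from four rationals. -/
def mkQ (a b c d : ℚ) : ℍ[ℚ] := ⟨a, b, c, d⟩

/-- A rational quaternion is a Lipschitz quaternion if all its coefficients are
integers. -/
def IsLipschitz (α : ℍ[ℚ]) : Prop :=
  ∃ a b c d : ℤ, α = mkQ a b c d

/-- A rational quaternion is a Hurwitz quaternion if its coefficients are all in ℤ
or all in ℤ + 1/2, i.e. 2α has integer coefficients of equal parity. -/
def IsHurwitz (α : ℍ[ℚ]) : Prop :=
  ∃ a b c d : ℤ, (2 : ℚ) • α = mkQ a b c d ∧
    a % 2 = b % 2 ∧ b % 2 = c % 2 ∧ c % 2 = d % 2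

/-- A unit of the Hurwitz order: a Hurwitz quaternion of norm 1. -/
def IsHurwitzUnit (ε : ℍ[ℚ]) : Prop :=
  IsHurwitz ε ∧ Quaternion.normSq ε = 1

/-- A primary (Lipschitz) quaternion: a₁ odd, the other coefficients even, and the
sum of the coefficients ≡ 1 (mod 4). -/
def Primary (α : ℍ[ℚ]) : Prop :=
  ∃ a b c d : ℤ, α = mkQ a b c d ∧ Odd a ∧ Even b ∧ Even c ∧ Even d ∧
    (a + b + c + d) % 4 = 1

/- ### Auxiliary lemmas -/

lemma bridge1 (x : ℤ) : x % 2 = 1 ↔ 2*(x : ZMod 4) = 2 := by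
  rw [show (2:ZMod 4)*(x:ZMod 4) = ((2*x : ℤ) : ZMod 4) by push_cast; ring,
    show (2:ZMod 4) = ((2:ℤ) : ZMod 4) by norm_num, ZMod.intCast_eq_intCast_iff']
  constructor <;> (intro h; omega)

lemma bridge0 (x : ℤ) : x % 2 = 0 ↔ 2*(x : ZMod 4) = 0 := by
  rw [show (2:ZMod 4)*(x:ZMod 4) = ((2*x : ℤ) : ZMod 4) by push_cast; ring,
    show (0:ZMod 4) = ((0:ℤ) : ZMod 4) by norm_num, ZMod.intCast_eq_intCast_iff']
  constructor <;> (intro h; omega)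

lemma bridge4 (x : ℤ) : x % 4 = 1 ↔ (x : ZMod 4) = 1 := by
  rw [show (1:ZMod 4) = ((1:ℤ) : ZMod 4) by norm_num, ZMod.intCast_eq_intCast_iff']
  constructor <;> (intro h; omega)

lemma bridge2 (x : ℤ) : x % 2 = 1 ↔ (x : ZMod 2) = 1 := by
  rw [show (1:ZMod 2) = ((1:ℤ) : ZMod 2) by norm_num, ZMod.intCast_eq_intCast_iff']
  constructor <;> (intro h; omega)

lemma mkQ_mul (a b c d a' b' c' d' : ℚ) : mkQ a b c d * mkQ a' b' c' d' =
    mkQ (a*a'-b*b'-c*c'-d*d') (a*b'+b*a'+c*d'-d*c') (a*c'-b*d'+c*a'+d*b')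
      (a*d'+b*c'-c*b'+d*a') := by
  ext <;> simp only [Quaternion.re_mul, Quaternion.imI_mul, Quaternion.imJ_mul,
    Quaternion.imK_mul] <;> simp [mkQ]

lemma mkQ_inj {a b c d a' b' c' d' : ℚ} (h : mkQ a b c d = mkQ a' b' c' d') :
    a = a' ∧ b = b' ∧ c = c' ∧ d = d' :=
  ⟨congrArg QuaternionAlgebra.re h, congrArg QuaternionAlgebra.imI h,
    congrArg QuaternionAlgebra.imJ h, congrArg QuaternionAlgebra.imK h⟩

lemma mkQ_smul (t a b c d : ℚ) : t • mkQ a b c d = mkQ (t*a) (t*b) (t*c) (t*d) := by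
  ext <;> simp only [Quaternion.re_smul, Quaternion.imI_smul, Quaternion.imJ_smul,
    Quaternion.imK_smul] <;> simp [mkQ]

lemma two_cases : ∀ x : ZMod 4, 2*x = 0 → x = 0 ∨ x = 2 := by decide

lemma key1 : ∀ a b c d a' b' c' d' : ZMod 4,
    2*b=0 → 2*c=0 → 2*d=0 → a+b+c+d=1 →
    2*b'=0 → 2*c'=0 → 2*d'=0 → a'+b'+c'+d'=1 →
    2*(a*a'-b*b'-c*c'-d*d')=2 ∧ 2*(a*b'+b*a'+c*d'-d*c')=0 ∧
    2*(a*c'-b*d'+c*a'+d*b')=0 ∧ 2*(a*d'+b*c'-c*b'+d*a')=0 ∧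
    (a*a'-b*b'-c*c'-d*d')+(a*b'+b*a'+c*d'-d*c')+(a*c'-b*d'+c*a'+d*b')+(a*d'+b*c'-c*b'+d*a')=1 := by
  intro a b c d a' b' c' d' hb hc hd hs hb' hc' hd' hs'
  have e : a = 1 - b - c - d := by linear_combination hs
  have e' : a' = 1 - b' - c' - d' := by linear_combination hs'
  subst e e'
  rcases two_cases b hb with rfl|rfl <;> rcases two_cases c hc with rfl|rfl <;>
    rcases two_cases d hd with rfl|rfl <;> rcases two_cases b' hb' with rfl|rfl <;>
    rcases two_cases c' hc' with rfl|rfl <;> rcases two_cases d' hd' with rfl|rfl <;> decide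

lemma key2 : ∀ A B C D : ZMod 4,
    2*B=0 → 2*C=0 → 2*D=0 → A+B+C+D=1 →
    ∀ g1 g2 g3 g4 : ZMod 4,
    2*(A*g1-B*g2-C*g3-D*g4)=2 → 2*(A*g2+B*g1+C*g4-D*g3)=0 →
    2*(A*g3-B*g4+C*g1+D*g2)=0 → 2*(A*g4+B*g3-C*g2+D*g1)=0 →
    (A*g1-B*g2-C*g3-D*g4)+(A*g2+B*g1+C*g4-D*g3)+(A*g3-B*g4+C*g1+D*g2)+(A*g4+B*g3-C*g2+D*g1)=1 →
    2*g1=2 ∧ 2*g2=0 ∧ 2*g3=0 ∧ 2*g4=0 ∧ g1+g2+g3+g4=1 := by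
  intro A B C D hB hC hD hs
  have e : A = 1 - B - C - D := by linear_combination hs
  subst e
  rcases two_cases B hB with rfl|rfl <;> rcases two_cases C hC with rfl|rfl <;>
    rcases two_cases D hD with rfl|rfl <;> decide

lemma key3 : ∀ A B C D : ZMod 4,
    2*B=0 → 2*C=0 → 2*D=0 → A+B+C+D=1 →
    ∀ g1 g2 g3 g4 : ZMod 4,
    2*(g1*A-g2*B-g3*C-g4*D)=2 → 2*(g1*B+g2*A+g3*D-g4*C)=0 →
    2*(g1*C-g2*D+g3*A+g4*B)=0 → 2*(g1*D+g2*C-g3*B+g4*A)=0 →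
    (g1*A-g2*B-g3*C-g4*D)+(g1*B+g2*A+g3*D-g4*C)+(g1*C-g2*D+g3*A+g4*B)+(g1*D+g2*C-g3*B+g4*A)=1 →
    2*g1=2 ∧ 2*g2=0 ∧ 2*g3=0 ∧ 2*g4=0 ∧ g1+g2+g3+g4=1 := by
  intro A B C D hB hC hD hs
  have e : A = 1 - B - C - D := by linear_combination hs
  subst e
  rcases two_cases B hB with rfl|rfl <;> rcases two_cases C hC with rfl|rfl <;>
    rcases two_cases D hD with rfl|rfl <;> decide

/-- primary quaternions are closed under multiplication, and a Hurwitz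
quotient (left or right) of primary quaternions is primary. -/
theorem primary_mul_and_quotient :
    (∀ α β : ℍ[ℚ], Primary α → Primary β → Primary (α * β)) ∧
      (∀ α β γ : ℍ[ℚ], Primary α → Primary β → IsHurwitz γ →
        (β = α * γ ∨ β = γ * α) → Primary γ) := by
  constructor
  · rintro α β ⟨a,b,c,d,rfl,ha,hb,hc,hd,hsum⟩ ⟨a',b',c',d',rfl,ha',hb',hc',hd',hsum'⟩
    rw [Int.odd_iff] at ha ha'
    rw [Int.even_iff] at hb hc hd hb' hc' hd'
    have K := key1 (a:ZMod 4) b c d a' b' c' d'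
      ((bridge0 b).mp hb) ((bridge0 c).mp hc) ((bridge0 d).mp hd)
      (by have := (bridge4 _).mp hsum; push_cast at this; linear_combination this)
      ((bridge0 b').mp hb') ((bridge0 c').mp hc') ((bridge0 d').mp hd')
      (by have := (bridge4 _).mp hsum'; push_cast at this; linear_combination this)
    refine ⟨a*a'-b*b'-c*c'-d*d', a*b'+b*a'+c*d'-d*c', a*c'-b*d'+c*a'+d*b',
      a*d'+b*c'-c*b'+d*a', ?_, ?_, ?_, ?_, ?_, ?_⟩
    · rw [mkQ_mul]; push_cast; rfl
    · rw [Int.odd_iff, bridge1]; push_cast; linear_combination K.1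
    · rw [Int.even_iff, bridge0]; push_cast; linear_combination K.2.1
    · rw [Int.even_iff, bridge0]; push_cast; linear_combination K.2.2.1
    · rw [Int.even_iff, bridge0]; push_cast; linear_combination K.2.2.2.1
    · rw [bridge4]; push_cast; linear_combination K.2.2.2.2
  · rintro α β γ ⟨A,B,C,D,rfl,hA,hB,hC,hD,hsA⟩ ⟨p,q,r,s,rfl,hp,hq,hr,hs,hsP⟩
      ⟨u,v,w,x,hγ,h1,h2,h3⟩ hcase
    rw [Int.odd_iff] at hA hp
    rw [Int.even_iff] at hB hC hD hq hr hs
    rcases Int.even_or_odd u with hu | hu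
    · -- γ is a Lipschitz quaternion
      rw [Int.even_iff] at hu
      obtain ⟨g1, g2, g3, g4, rfl, rfl, rfl, rfl⟩ :
          ∃ g1 g2 g3 g4 : ℤ, u = 2*g1 ∧ v = 2*g2 ∧ w = 2*g3 ∧ x = 2*g4 :=
        ⟨u/2, v/2, w/2, x/2, by omega, by omega, by omega, by omega⟩
      have hγ' : γ = mkQ (g1:ℚ) g2 g3 g4 := by
        have h0 : γ = (2⁻¹:ℚ) • ((2:ℚ) • γ) := by rw [smul_smul]; norm_num
        rw [h0, hγ, mkQ_smul]
        refine QuaternionAlgebra.ext ?_ ?_ ?_ ?_ <;> simp [mkQ] <;> push_cast <;> ring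
      rw [hγ'] at hcase
      rcases hcase with hcase | hcase
      · rw [mkQ_mul] at hcase
        obtain ⟨e1, e2, e3, e4⟩ := mkQ_inj hcase
        have f1 : p = A*g1 - B*g2 - C*g3 - D*g4 := by exact_mod_cast e1
        have f2 : q = A*g2 + B*g1 + C*g4 - D*g3 := by exact_mod_cast e2
        have f3 : r = A*g3 - B*g4 + C*g1 + D*g2 := by exact_mod_cast e3
        have f4 : s = A*g4 + B*g3 - C*g2 + D*g1 := by exact_mod_cast e4
        rw [f1] at hp; rw [f2] at hq; rw [f3] at hr; rw [f4] at hs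
        rw [f1, f2, f3, f4] at hsP
        have K := key2 (A:ZMod 4) B C D
          ((bridge0 B).mp hB) ((bridge0 C).mp hC) ((bridge0 D).mp hD)
          (by have := (bridge4 _).mp hsA; push_cast at this; linear_combination this)
          (g1:ZMod 4) g2 g3 g4
          (by have := (bridge1 _).mp hp; push_cast at this; linear_combination this)
          (by have := (bridge0 _).mp hq; push_cast at this; linear_combination this)
          (by have := (bridge0 _).mp hr; push_cast at this; linear_combination this)
          (by have := (bridge0 _).mp hs; push_cast at this; linear_combination this)
          (by have := (bridge4 _).mp hsP; push_cast at this; linear_combination this)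
        refine ⟨g1, g2, g3, g4, hγ', ?_, ?_, ?_, ?_, ?_⟩
        · rw [Int.odd_iff, bridge1]; exact K.1
        · rw [Int.even_iff, bridge0]; exact K.2.1
        · rw [Int.even_iff, bridge0]; exact K.2.2.1
        · rw [Int.even_iff, bridge0]; exact K.2.2.2.1
        · rw [bridge4]; push_cast; linear_combination K.2.2.2.2
      · rw [mkQ_mul] at hcase
        obtain ⟨e1, e2, e3, e4⟩ := mkQ_inj hcase
        have f1 : p = g1*A - g2*B - g3*C - g4*D := by exact_mod_cast e1
        have f2 : q = g1*B + g2*A + g3*D - g4*C := by exact_mod_cast e2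
        have f3 : r = g1*C - g2*D + g3*A + g4*B := by exact_mod_cast e3
        have f4 : s = g1*D + g2*C - g3*B + g4*A := by exact_mod_cast e4
        rw [f1] at hp; rw [f2] at hq; rw [f3] at hr; rw [f4] at hs
        rw [f1, f2, f3, f4] at hsP
        have K := key3 (A:ZMod 4) B C D
          ((bridge0 B).mp hB) ((bridge0 C).mp hC) ((bridge0 D).mp hD)
          (by have := (bridge4 _).mp hsA; push_cast at this; linear_combination this)
          (g1:ZMod 4) g2 g3 g4
          (by have := (bridge1 _).mp hp; push_cast at this; linear_combination this)
          (by have := (bridge0 _).mp hq; push_cast at this; linear_combination this)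
          (by have := (bridge0 _).mp hr; push_cast at this; linear_combination this)
          (by have := (bridge0 _).mp hs; push_cast at this; linear_combination this)
          (by have := (bridge4 _).mp hsP; push_cast at this; linear_combination this)
        refine ⟨g1, g2, g3, g4, hγ', ?_, ?_, ?_, ?_, ?_⟩
        · rw [Int.odd_iff, bridge1]; exact K.1
        · rw [Int.even_iff, bridge0]; exact K.2.1
        · rw [Int.even_iff, bridge0]; exact K.2.2.1
        · rw [Int.even_iff, bridge0]; exact K.2.2.2.1
        · rw [bridge4]; push_cast; linear_combination K.2.2.2.2
    · -- half-integer case: impossible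
      exfalso
      rw [Int.odd_iff] at hu
      have hv : v % 2 = 1 := by omega
      have hw : w % 2 = 1 := by omega
      have hx : x % 2 = 1 := by omega
      have eZ : 2*p = A*u - B*v - C*w - D*x := by
        rcases hcase with hcase | hcase
        · have e : (2:ℚ) • mkQ (p:ℚ) q r s = mkQ (A:ℚ) B C D * mkQ (u:ℚ) v w x := by
            rw [hcase, ← mul_smul_comm, hγ]
          rw [mkQ_smul, mkQ_mul] at e
          have := (mkQ_inj e).1
          exact_mod_cast this
        · have e : (2:ℚ) • mkQ (p:ℚ) q r s = mkQ (u:ℚ) v w x * mkQ (A:ℚ) B C D := by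
            rw [hcase, ← smul_mul_assoc, hγ]
          rw [mkQ_smul, mkQ_mul] at e
          have := (mkQ_inj e).1
          have e' : 2*p = u*A - v*B - w*C - x*D := by exact_mod_cast this
          linarith [e']
      obtain ⟨k1, hk1⟩ : ∃ k, A*u = 2*k+1 := by
        obtain ⟨k, hk⟩ := Int.odd_mul.mpr ⟨Int.odd_iff.mpr hA, Int.odd_iff.mpr hu⟩
        exact ⟨k, hk⟩
      obtain ⟨b0, hb0⟩ : ∃ t, B = 2*t := ⟨B/2, by omega⟩
      obtain ⟨c0, hc0⟩ : ∃ t, C = 2*t := ⟨C/2, by omega⟩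
      obtain ⟨d0, hd0⟩ : ∃ t, D = 2*t := ⟨D/2, by omega⟩
      have final : 2*p = 2*(k1 - b0*v - c0*w - d0*x) + 1 := by
        linear_combination eZ + hk1 - v*hb0 - w*hc0 - x*hd0
      generalize k1 - b0*v - c0*w - d0*x = t at final
      omega
end

section
/- Let f₄(N) denote the number of 4-icubes in ℤ⁴ with edge norm N, and f₃(N) the number of 3-icubes in ℤ⁴ with edge norm N. Then f₄(N) = 2·f₃(N) for every positive integer N. -/
open Matrix Finset

namespace Icube19

/-- The 4×4 array whose first three rows are `w` and last row is `x`. -/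
def mk4 (w : Fin 3 → Fin 4 → ℤ) (x : Fin 4 → ℤ) : Fin 4 → Fin 4 → ℤ :=
  fun i => if h : (i : ℕ) < 3 then w ⟨i, h⟩ else x

/-- Generalized cross product (cofactor along the last row). -/
def cross (w : Fin 3 → Fin 4 → ℤ) (s : Fin 4) : ℤ :=
  (Matrix.of (mk4 w (Pi.single s 1))).det

/-- The normalized fourth row. -/
def ext4 (N : ℤ) (w : Fin 3 → Fin 4 → ℤ) : Fin 4 → ℤ := fun s => cross w s / N

lemma mk4_update (w : Fin 3 → Fin 4 → ℤ) (x : Fin 4 → ℤ) :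
    Matrix.of (mk4 w x) = (Matrix.of (mk4 w 0)).updateRow 3 x := by
  ext i t
  fin_cases i <;> simp [mk4, Matrix.updateRow_apply] <;> rfl

noncomputable def L (w : Fin 3 → Fin 4 → ℤ) : (Fin 4 → ℤ) →ₗ[ℤ] ℤ where
  toFun := fun y => ((Matrix.of (mk4 w 0)).updateRow 3 y).det
  map_add' := fun _ _ => Matrix.det_updateRow_add _ _ _ _
  map_smul' := fun _ _ => Matrix.det_updateRow_smul _ _ _ _

lemma cross_dot (w : Fin 3 → Fin 4 → ℤ) (x : Fin 4 → ℤ) :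
    ∑ s, x s * cross w s = (Matrix.of (mk4 w x)).det := by
  have hx : x = ∑ s, x s • Pi.single s (1:ℤ) := by
    funext t
    rw [Finset.sum_apply]
    simp_rw [Pi.smul_apply, smul_eq_mul, Pi.single_apply]
    simp
  have h1 : ∀ s : Fin 4, cross w s = L w (Pi.single s 1) := by
    intro s
    rw [cross, mk4_update]
    rfl
  calc ∑ s, x s * cross w s = ∑ s, x s • (L w (Pi.single s 1)) := by
        simp_rw [smul_eq_mul, h1]
    _ = L w (∑ s, x s • Pi.single s (1:ℤ)) := by
        rw [map_sum]
        simp_rw [_root_.map_smul]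
    _ = (Matrix.of (mk4 w x)).det := by rw [← hx, mk4_update]; rfl

lemma colOrth {N : ℤ} (hN : N ≠ 0) {B : Matrix (Fin 4) (Fin 4) ℤ}
    (h : B * Bᵀ = N • (1 : Matrix (Fin 4) (Fin 4) ℤ)) :
    ∀ s t, ∑ i, B i s * B i t = if s = t then N else 0 := by
  let C : Matrix (Fin 4) (Fin 4) ℚ := B.map (Int.cast)
  have hC : C * Cᵀ = (N : ℚ) • 1 := by
    ext i j
    have h0 := congrFun (congrFun h i) j
    simp only [Matrix.mul_apply, Matrix.transpose_apply, Matrix.smul_apply,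
      Matrix.one_apply, smul_eq_mul, mul_ite, mul_one, mul_zero] at h0 ⊢
    simp only [C, Matrix.map_apply]
    split_ifs with hij
    · rw [if_pos hij] at h0; exact_mod_cast h0
    · rw [if_neg hij] at h0; exact_mod_cast h0
  have h1 : C * ((N:ℚ)⁻¹ • Cᵀ) = 1 := by
    rw [Matrix.mul_smul, hC, smul_smul, inv_mul_cancel₀ (by exact_mod_cast hN), one_smul]
  have h2 : ((N:ℚ)⁻¹ • Cᵀ) * C = 1 := mul_eq_one_comm.mp h1
  have h3 : Cᵀ * C = (N:ℚ) • 1 := by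
    have h4 := congrArg (fun M => (N:ℚ) • M) h2
    simp only [Matrix.smul_mul, smul_smul,
      mul_inv_cancel₀ (show (N:ℚ) ≠ 0 by exact_mod_cast hN), one_smul] at h4
    exact h4
  intro s t
  have h5 := congrFun (congrFun h3 s) t
  simp only [Matrix.mul_apply, Matrix.transpose_apply, Matrix.smul_apply, Matrix.one_apply,
    smul_eq_mul, mul_ite, mul_one, mul_zero, C, Matrix.map_apply] at h5
  split_ifs at h5 with hst
  · rw [if_pos hst]; exact_mod_cast h5
  · rw [if_neg hst]; exact_mod_cast h5

section
variable (N : ℤ) (hN : 0 < N) (w : Fin 3 → Fin 4 → ℤ)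
  (hw2 : ∀ i j, i ≠ j → ∑ t, w i t * w j t = 0)
  (hw3 : ∀ i, ∑ t, w i t * w i t = N)

include hw2 hw3 in
lemma cross_sq (s : Fin 4) :
    cross w s ^ 2 = N ^ 2 * (N - ((w 0 s)^2 + (w 1 s)^2 + (w 2 s)^2)) := by
  set M : Matrix (Fin 4) (Fin 4) ℤ := Matrix.of (mk4 w (Pi.single s 1)) with hM
  have hs1 : ∀ y : Fin 4 → ℤ, ∑ x, y x * (Pi.single s 1 : Fin 4 → ℤ) x = y s := by
    intro y; simp [Pi.single_apply]
  have hs2 : ∀ y : Fin 4 → ℤ, ∑ x, (Pi.single s 1 : Fin 4 → ℤ) x * y x = y s := by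
    intro y; simp [Pi.single_apply]
  have hs3 : ∑ x, (Pi.single s 1 : Fin 4 → ℤ) x * (Pi.single s 1 : Fin 4 → ℤ) x = 1 := by
    simp [Pi.single_apply]
  have h1 : M * Mᵀ =
      !![N, 0, 0, w 0 s; 0, N, 0, w 1 s; 0, 0, N, w 2 s; w 0 s, w 1 s, w 2 s, 1] := by
    ext i j
    rw [Matrix.mul_apply]
    simp only [Matrix.transpose_apply]
    fin_cases i <;> fin_cases j
    · exact hw3 0
    · exact hw2 0 1 (by decide)
    · exact hw2 0 2 (by decide)
    · exact hs1 (w 0)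
    · exact hw2 1 0 (by decide)
    · exact hw3 1
    · exact hw2 1 2 (by decide)
    · exact hs1 (w 1)
    · exact hw2 2 0 (by decide)
    · exact hw2 2 1 (by decide)
    · exact hw3 2
    · exact hs1 (w 2)
    · exact hs2 (w 0)
    · exact hs2 (w 1)
    · exact hs2 (w 2)
    · exact hs3
  have h2 : cross w s ^ 2 = (M * Mᵀ).det := by
    rw [Matrix.det_mul, Matrix.det_transpose, sq, cross, hM]
  rw [h2, h1]
  norm_num [Matrix.det_succ_row_zero, Fin.sum_univ_succ, Matrix.det_fin_three]
  rw [show (Fin.castSucc 2 : Fin 4) = (2 : Fin 4) from rfl]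
  norm_num
  simp [Matrix.cons_val]
  ring

include hw2 hw3 in
lemma ext4_mul : ∀ s, N * ext4 N w s = cross w s := by
  intro s
  have hdvd : N ∣ cross w s := by
    rw [← Int.pow_dvd_pow_iff (two_ne_zero)]
    exact ⟨N - ((w 0 s)^2 + (w 1 s)^2 + (w 2 s)^2), cross_sq N w hw2 hw3 s⟩
  exact Int.mul_ediv_cancel' hdvd

lemma cross_orth (j : Fin 3) : ∑ s, w j s * cross w s = 0 := by
  rw [cross_dot]
  fin_cases j
  · exact Matrix.det_zero_of_row_eq (show (0:Fin 4) ≠ 3 by decide) rfl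
  · exact Matrix.det_zero_of_row_eq (show (1:Fin 4) ≠ 3 by decide) rfl
  · exact Matrix.det_zero_of_row_eq (show (2:Fin 4) ≠ 3 by decide) rfl

include hN hw2 hw3 in
lemma ext4_orth (j : Fin 3) : ∑ s, ext4 N w s * w j s = 0 := by
  have h1 : N * ∑ s, ext4 N w s * w j s = 0 := by
    rw [Finset.mul_sum]
    calc ∑ s, N * (ext4 N w s * w j s) = ∑ s, w j s * cross w s := by
          apply Finset.sum_congr rfl
          intro s _
          rw [← mul_assoc, ext4_mul N w hw2 hw3 s]
          ring
      _ = 0 := cross_orth w j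
  exact (mul_eq_zero.mp h1).resolve_left hN.ne'

include hN hw2 hw3 in
lemma ext4_norm : ∑ s, ext4 N w s * ext4 N w s = N := by
  have h1 : N ^ 2 * ∑ s, ext4 N w s * ext4 N w s = N ^ 2 * N := by
    rw [Finset.mul_sum]
    calc ∑ s, N ^ 2 * (ext4 N w s * ext4 N w s)
        = ∑ s, (N * ext4 N w s) * (N * ext4 N w s) := by
          apply Finset.sum_congr rfl; intro s _; ring
      _ = ∑ s, cross w s ^ 2 := by
          apply Finset.sum_congr rfl; intro s _
          rw [ext4_mul N w hw2 hw3 s, sq]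
      _ = ∑ s : Fin 4, N ^ 2 * (N - ((w 0 s)^2 + (w 1 s)^2 + (w 2 s)^2)) := by
          exact Finset.sum_congr rfl fun s _ => cross_sq N w hw2 hw3 s
      _ = N ^ 2 * N := by
          rw [← Finset.mul_sum]
          congr 1
          have e : ∀ i : Fin 3, ∑ s : Fin 4, (w i s)^2 = N := by
            intro i
            rw [← hw3 i]
            apply Finset.sum_congr rfl
            intro s _
            rw [pow_two]
          rw [Finset.sum_sub_distrib, Finset.sum_add_distrib, Finset.sum_add_distrib,
            e 0, e 1, e 2, Finset.sum_const]
          simp only [Finset.card_univ, Fintype.card_fin, nsmul_eq_mul]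
          push_cast
          ring
  exact mul_left_cancel₀ (pow_ne_zero 2 hN.ne') h1

include hN hw2 hw3 in
lemma unique_ext (u x : Fin 4 → ℤ)
    (hu1 : ∀ j, ∑ s, u s * w j s = 0) (hu2 : ∑ s, u s * u s = N)
    (hx1 : ∀ j, ∑ s, x s * w j s = 0) (hx2 : ∑ s, x s * x s = N) :
    x = u ∨ x = -u := by
  set B : Matrix (Fin 4) (Fin 4) ℤ := Matrix.of (mk4 w u) with hB
  have hBr : B * Bᵀ = N • (1 : Matrix (Fin 4) (Fin 4) ℤ) := by
    ext i j
    rw [Matrix.mul_apply]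
    simp only [Matrix.transpose_apply, Matrix.smul_apply, Matrix.one_apply, smul_eq_mul,
      mul_ite, mul_one, mul_zero]
    have hc : ∀ j : Fin 3, ∑ s, w j s * u s = 0 := by
      intro j; rw [← hu1 j]; exact Finset.sum_congr rfl fun t _ => mul_comm _ _
    fin_cases i <;> fin_cases j <;> simp only [if_true, if_false, reduceIte]
    · exact hw3 0
    · exact hw2 0 1 (by decide)
    · exact hw2 0 2 (by decide)
    · exact hc 0
    · exact hw2 1 0 (by decide)
    · exact hw3 1
    · exact hw2 1 2 (by decide)
    · exact hc 1
    · exact hw2 2 0 (by decide)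
    · exact hw2 2 1 (by decide)
    · exact hw3 2
    · exact hc 2
    · exact hu1 0
    · exact hu1 1
    · exact hu1 2
    · exact hu2
  have hcol := colOrth hN.ne' hBr
  set d : ℤ := ∑ s, x s * u s with hd
  have key : d ^ 2 = N * N := by
    have e1 : ∀ i : Fin 4, (∑ s, x s * B i s) ^ 2
        = ∑ s, ∑ t, (x s * x t) * (B i s * B i t) := by
      intro i
      rw [sq, Finset.sum_mul_sum]
      exact Finset.sum_congr rfl fun s _ => Finset.sum_congr rfl fun t _ => by ring
    have e2 : ∑ i : Fin 4, (∑ s, x s * B i s) ^ 2 = N * N := by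
      simp_rw [e1]
      rw [Finset.sum_comm]
      have e3 : ∀ s : Fin 4, ∑ i : Fin 4, ∑ t : Fin 4, (x s * x t) * (B i s * B i t)
          = ∑ t : Fin 4, (x s * x t) * ∑ i : Fin 4, B i s * B i t := by
        intro s
        rw [Finset.sum_comm]
        exact Finset.sum_congr rfl fun t _ => by rw [Finset.mul_sum]
      simp_rw [e3, hcol]
      have e4 : ∀ s : Fin 4, ∑ t : Fin 4, (x s * x t) * (if s = t then N else 0)
          = x s * x s * N := by
        intro s
        simp [mul_ite]
      simp_rw [e4]
      rw [← Finset.sum_mul, hx2]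
    have e50 : ∑ s, x s * B 0 s = 0 := hx1 0
    have e51 : ∑ s, x s * B 1 s = 0 := hx1 1
    have e52 : ∑ s, x s * B 2 s = 0 := hx1 2
    have e6 : ∑ s, x s * B 3 s = d := rfl
    rw [Fin.sum_univ_four, e50, e51, e52, e6] at e2
    nlinarith [e2]
  have hz : ∑ t, (N * x t - d * u t) ^ 2 = 0 := by
    have expand : ∀ t, (N * x t - d * u t) ^ 2
        = N ^ 2 * (x t * x t) - (2 * N * d) * (x t * u t) + d ^ 2 * (u t * u t) := by
      intro t; ring
    simp_rw [expand]
    rw [Finset.sum_add_distrib, Finset.sum_sub_distrib, ← Finset.mul_sum, ← Finset.mul_sum,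
      ← Finset.mul_sum, hx2, hu2, ← hd]
    nlinarith [key]
  have h0 : ∀ t, N * x t - d * u t = 0 := by
    intro t
    have ht := (Finset.sum_eq_zero_iff_of_nonneg (fun i _ => sq_nonneg _)).mp hz t (Finset.mem_univ t)
    exact pow_eq_zero_iff (two_ne_zero) |>.mp ht
  have hdN : d = N ∨ d = -N := by
    have : (d - N) * (d + N) = 0 := by nlinarith [key]
    rcases mul_eq_zero.mp this with h | h
    · left; linarith
    · right; linarith
  rcases hdN with h | h
  · left
    funext t
    have := h0 t
    rw [h] at this
    have : N * x t = N * u t := by linarith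
    exact mul_left_cancel₀ hN.ne' this
  · right
    funext t
    have := h0 t
    rw [h] at this
    have : N * x t = N * (-u t) := by linarith
    simpa using mul_left_cancel₀ hN.ne' this

include hN hw2 hw3 in
lemma mem4 (hw1 : ∀ ℓ, w ℓ ≠ 0) (x : Fin 4 → ℤ)
    (hx1 : ∀ j, ∑ s, x s * w j s = 0) (hx2 : ∑ s, x s * x s = N) :
    (∀ ℓ, mk4 w x ℓ ≠ 0) ∧ (∀ i j, i ≠ j → ∑ t, mk4 w x i t * mk4 w x j t = 0) ∧
      (∀ i, ∑ t, mk4 w x i t * mk4 w x i t = N) := by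
  have hc : ∀ j : Fin 3, ∑ s, w j s * x s = 0 := by
    intro j; rw [← hx1 j]; exact Finset.sum_congr rfl fun t _ => mul_comm _ _
  have hxne : x ≠ 0 := by
    intro h
    rw [h] at hx2
    simp at hx2
    exact hN.ne' hx2.symm
  refine ⟨?_, ?_, ?_⟩
  · intro ℓ
    fin_cases ℓ
    · exact hw1 0
    · exact hw1 1
    · exact hw1 2
    · exact hxne
  · intro i j hij
    fin_cases i <;> fin_cases j
    · exact absurd rfl hij
    · exact hw2 0 1 (by decide)
    · exact hw2 0 2 (by decide)
    · exact hc 0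
    · exact hw2 1 0 (by decide)
    · exact absurd rfl hij
    · exact hw2 1 2 (by decide)
    · exact hc 1
    · exact hw2 2 0 (by decide)
    · exact hw2 2 1 (by decide)
    · exact absurd rfl hij
    · exact hc 2
    · exact hx1 0
    · exact hx1 1
    · exact hx1 2
    · exact absurd rfl hij
  · intro i
    fin_cases i
    · exact hw3 0
    · exact hw3 1
    · exact hw3 2
    · exact hx2

end

lemma icube_finite (N : ℤ) (k : ℕ) :
    {v : Fin k → Fin 4 → ℤ | (∀ ℓ, v ℓ ≠ 0) ∧ (∀ i j, i ≠ j → ∑ t, v i t * v j t = 0) ∧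
      (∀ i, ∑ t, v i t * v i t = N)}.Finite := by
  apply Set.Finite.subset
    (Set.Finite.pi (fun _ : Fin k => Set.Finite.pi (fun _ : Fin 4 => Set.finite_Icc (-N) N)))
  rintro v ⟨-, -, h3⟩
  rw [Set.mem_pi]
  intro i _
  rw [Set.mem_pi]
  intro t _
  have hle : v i t * v i t ≤ N := by
    rw [← h3 i]
    exact Finset.single_le_sum (f := fun t => v i t * v i t)
      (fun t _ => mul_self_nonneg _) (Finset.mem_univ t)
  constructor <;> nlinarith [hle]

end Icube19

open Icube19
/-- f₄(N) = 2·f₃(N), where f_m(N) counts (ordered) m-icubes in ℤ⁴ with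
edge norm N. -/
theorem count_icube4_eq_two_mul_count_icube3 (N : ℤ) (hN : 0 < N) :
    Set.ncard {v : Fin 4 → (Fin 4 → ℤ) |
        (∀ ℓ, v ℓ ≠ 0) ∧ (∀ i j, i ≠ j → ∑ t, v i t * v j t = 0) ∧
          (∀ i, ∑ t, v i t * v i t = N)} =
      2 * Set.ncard {v : Fin 3 → (Fin 4 → ℤ) |
        (∀ ℓ, v ℓ ≠ 0) ∧ (∀ i j, i ≠ j → ∑ t, v i t * v j t = 0) ∧
          (∀ i, ∑ t, v i t * v i t = N)} := by
  classical
  set S3 : Set (Fin 3 → Fin 4 → ℤ) := {v | (∀ ℓ, v ℓ ≠ 0) ∧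
    (∀ i j, i ≠ j → ∑ t, v i t * v j t = 0) ∧ (∀ i, ∑ t, v i t * v i t = N)} with hS3
  set S4 : Set (Fin 4 → Fin 4 → ℤ) := {v | (∀ ℓ, v ℓ ≠ 0) ∧
    (∀ i j, i ≠ j → ∑ t, v i t * v j t = 0) ∧ (∀ i, ∑ t, v i t * v i t = N)} with hS4
  have hfin3 : S3.Finite := icube_finite N 3
  set F : (Fin 3 → Fin 4 → ℤ) → (Fin 4 → Fin 4 → ℤ) := fun w => mk4 w (ext4 N w) with hF
  set G : (Fin 3 → Fin 4 → ℤ) → (Fin 4 → Fin 4 → ℤ) := fun w => mk4 w (-(ext4 N w)) with hG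
  -- nonvanishing of ext4 on S3
  have hUnz : ∀ w ∈ S3, ext4 N w ≠ 0 := by
    rintro w ⟨hw1, hw2, hw3⟩ h
    have := ext4_norm N hN w hw2 hw3
    rw [h] at this
    simp at this
    exact hN.ne' this.symm
  -- set equality
  have hset : S4 = F '' S3 ∪ G '' S3 := by
    ext v
    constructor
    · rintro ⟨hv1, hv2, hv3⟩
      set w : Fin 3 → Fin 4 → ℤ := fun j => v ⟨(j:ℕ), by omega⟩ with hw
      have hw1 : ∀ ℓ, w ℓ ≠ 0 := fun ℓ => hv1 _
      have hw2 : ∀ i j, i ≠ j → ∑ t, w i t * w j t = 0 := by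
        intro i j hij
        exact hv2 ⟨(i:ℕ), by omega⟩ ⟨(j:ℕ), by omega⟩
          (fun h => hij (Fin.ext (by simpa using congrArg Fin.val h)))
      have hw3 : ∀ i, ∑ t, w i t * w i t = N := fun i => hv3 _
      have hwS3 : w ∈ S3 := ⟨hw1, hw2, hw3⟩
      have hvw : mk4 w (v 3) = v := by
        funext i
        fin_cases i <;> rfl
      have hx1 : ∀ j : Fin 3, ∑ s, v 3 s * w j s = 0 := by
        intro j
        exact hv2 3 ⟨(j:ℕ), by omega⟩
          (fun h => by
            have := congrArg Fin.val h
            simp at this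
            omega)
      rcases unique_ext N hN w hw2 hw3 (ext4 N w) (v 3)
          (ext4_orth N hN w hw2 hw3) (ext4_norm N hN w hw2 hw3) hx1 (hv3 3) with h | h
      · left
        exact ⟨w, hwS3, by show mk4 w (ext4 N w) = v; rw [← h, hvw]⟩
      · right
        refine ⟨w, hwS3, ?_⟩
        show mk4 w (-(ext4 N w)) = v
        rw [← h, hvw]
    · rintro (⟨w, ⟨hw1, hw2, hw3⟩, rfl⟩ | ⟨w, ⟨hw1, hw2, hw3⟩, rfl⟩)
      · exact mem4 N hN w hw2 hw3 hw1 (ext4 N w)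
          (ext4_orth N hN w hw2 hw3) (ext4_norm N hN w hw2 hw3)
      · refine mem4 N hN w hw2 hw3 hw1 (-(ext4 N w)) ?_ ?_
        · intro j
          have := ext4_orth N hN w hw2 hw3 j
          simp only [Pi.neg_apply, neg_mul]
          rw [Finset.sum_neg_distrib, this, neg_zero]
        · have := ext4_norm N hN w hw2 hw3
          simp only [Pi.neg_apply, neg_mul_neg]
          exact this
  -- injectivity
  have hinjF : Set.InjOn F S3 := by
    intro w1 _ w2 _ h
    funext j
    fin_cases j
    · exact congrFun h 0
    · exact congrFun h 1
    · exact congrFun h 2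
  have hinjG : Set.InjOn G S3 := by
    intro w1 _ w2 _ h
    funext j
    fin_cases j
    · exact congrFun h 0
    · exact congrFun h 1
    · exact congrFun h 2
  -- disjointness
  have hdisj : Disjoint (F '' S3) (G '' S3) := by
    rw [Set.disjoint_left]
    rintro v ⟨w1, hw1S, rfl⟩ ⟨w2, hw2S, heq⟩
    have hww : w2 = w1 := by
      funext j
      fin_cases j
      · exact congrFun heq 0
      · exact congrFun heq 1
      · exact congrFun heq 2
    have h3 : -(ext4 N w2) = ext4 N w1 := congrFun heq 3
    rw [hww] at h3
    apply hUnz w1 hw1S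
    funext s
    have := congrFun h3 s
    simp only [Pi.neg_apply] at this
    simp only [Pi.zero_apply]
    omega
  rw [hset, Set.ncard_union_eq hdisj (hfin3.image F) (hfin3.image G),
    Set.ncard_image_of_injOn hinjF, Set.ncard_image_of_injOn hinjG]
  ring
end
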